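/- Suppose f is submodular with f(∅)=0 and f(X) = ∑_{C∈P} f(X∩C) for all X ⊆ V for a partition P of V. Let g(x) = ∑_{i∈V} x_i²/w_i with w_i > 0. Then the unique minimizer x* of g over B(f) is the direct sum ⊕_{C∈P} x*_C where each x*_C is the unique minimizer of ∑_{i∈C} x_i²/w_i over the base polyhedron B_C(f) of the restriction of f to subsets of C. -/
import Mathlib


/-- Decomposition of the weighted egalitarian solution: if a submodular `f`
with `f ∅ = 0` decomposes additively across a partition `P` of `V`, then `x`
minimizes `g(x) = ∑ i, x i ^ 2 / w i` over the base polyhedron `B(f)` if and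
only if, for each block `C ∈ P`, the restriction of `x` to `C` lies in the
base polyhedron `B_C(f)` of the subgame on `C` and minimizes the block
objective `∑ i ∈ C, x i ^ 2 / w i` there. -/
theorem egalitarian_decomposition {V : Type*} [Fintype V] [DecidableEq V]
    (f : Finset V → ℝ) (P : Finset (Finset V))
    (h0 : f ∅ = 0)
    (hsub : ∀ X Y : Finset V, f (X ∪ Y) + f (X ∩ Y) ≤ f X + f Y)
    (hne : ∀ C ∈ P, C.Nonempty)
    (hdisj : ∀ C ∈ P, ∀ C' ∈ P, C ≠ C' → Disjoint C C')
    (hcover : ∀ i : V, ∃ C ∈ P, i ∈ C)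
    (hdec : ∀ X : Finset V, f X = ∑ C ∈ P, f (X ∩ C))
    (w : V → ℝ) (hw : ∀ i, 0 < w i) (x : V → ℝ) :
    (((∀ X : Finset V, ∑ k ∈ X, x k ≤ f X) ∧ ∑ k, x k = f Finset.univ) ∧
      (∀ y : V → ℝ,
        ((∀ X : Finset V, ∑ k ∈ X, y k ≤ f X) ∧ ∑ k, y k = f Finset.univ) →
        ∑ i, x i ^ 2 / w i ≤ ∑ i, y i ^ 2 / w i))
    ↔
    (∀ C ∈ P,
      ((∀ X : Finset V, X ⊆ C → ∑ k ∈ X, x k ≤ f X) ∧ ∑ k ∈ C, x k = f C) ∧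
      (∀ y : V → ℝ,
        ((∀ X : Finset V, X ⊆ C → ∑ k ∈ X, y k ≤ f X) ∧ ∑ k ∈ C, y k = f C) →
        ∑ i ∈ C, x i ^ 2 / w i ≤ ∑ i ∈ C, y i ^ 2 / w i)) := by
  -- sum decomposition over partition
  have hsum : ∀ (X : Finset V) (h : V → ℝ),
      ∑ k ∈ X, h k = ∑ C ∈ P, ∑ k ∈ X ∩ C, h k := by
    intro X h
    have hX : X = P.biUnion (fun C => X ∩ C) := by
      ext i
      simp only [Finset.mem_biUnion, Finset.mem_inter]
      constructor
      · intro hi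
        obtain ⟨C, hC, hiC⟩ := hcover i
        exact ⟨C, hC, hi, hiC⟩
      · rintro ⟨C, _, hi, _⟩; exact hi
    rw [hX, Finset.sum_biUnion]
    · apply Finset.sum_congr rfl
      intro C hC
      congr 1
      rw [← hX]
    · intro C hC C' hC' hne'
      apply Finset.disjoint_left.mpr
      intro a ha ha'
      exact (Finset.disjoint_left.mp (hdisj C hC C' hC' hne'))
        (Finset.mem_inter.mp ha).2 (Finset.mem_inter.mp ha').2
  have hsumU : ∀ (h : V → ℝ), ∑ k, h k = ∑ C ∈ P, ∑ k ∈ C, h k := by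
    intro h
    rw [hsum Finset.univ h]
    exact Finset.sum_congr rfl fun C _ => by rw [Finset.univ_inter]
  -- membership equivalence
  have hmem : ∀ z : V → ℝ,
      ((∀ X : Finset V, ∑ k ∈ X, z k ≤ f X) ∧ ∑ k, z k = f Finset.univ) ↔
      (∀ C ∈ P, (∀ X : Finset V, X ⊆ C → ∑ k ∈ X, z k ≤ f X) ∧ ∑ k ∈ C, z k = f C) := by
    intro z
    constructor
    · rintro ⟨hle, heq⟩
      have hsums : ∑ C ∈ P, (∑ k ∈ C, z k) = ∑ C ∈ P, f C := by
        rw [← hsumU z, heq, hdec Finset.univ]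
        exact Finset.sum_congr rfl fun C _ => by rw [Finset.univ_inter]
      have hall : ∀ C ∈ P, ∑ k ∈ C, z k = f C :=
        (Finset.sum_eq_sum_iff_of_le (fun C _ => hle C)).mp hsums
      intro C hC
      exact ⟨fun X _ => hle X, hall C hC⟩
    · intro hblocks
      constructor
      · intro X
        rw [hsum X z, hdec X]
        apply Finset.sum_le_sum
        intro C hC
        exact (hblocks C hC).1 (X ∩ C) Finset.inter_subset_right
      · rw [hsumU z, hdec Finset.univ]
        apply Finset.sum_congr rfl
        intro C hC
        rw [Finset.univ_inter]
        exact (hblocks C hC).2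
  constructor
  · rintro ⟨hxB, hxmin⟩
    have hxblocks := (hmem x).mp hxB
    intro C hC
    refine ⟨hxblocks C hC, ?_⟩
    intro y hy
    classical
    set y' : V → ℝ := fun i => if i ∈ C then y i else x i with hy'def
    have hy'B : (∀ X : Finset V, ∑ k ∈ X, y' k ≤ f X) ∧ ∑ k, y' k = f Finset.univ := by
      apply (hmem y').mpr
      intro C' hC'
      by_cases hCC : C' = C
      · subst hCC
        constructor
        · intro X hX
          have : ∑ k ∈ X, y' k = ∑ k ∈ X, y k :=
            Finset.sum_congr rfl fun k hk => if_pos (hX hk)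
          rw [this]; exact hy.1 X hX
        · have : ∑ k ∈ C', y' k = ∑ k ∈ C', y k :=
            Finset.sum_congr rfl fun k hk => if_pos hk
          rw [this]; exact hy.2
      · have hdj := hdisj C' hC' C hC hCC
        have hxeq : ∀ X : Finset V, X ⊆ C' → ∑ k ∈ X, y' k = ∑ k ∈ X, x k := by
          intro X hX
          apply Finset.sum_congr rfl
          intro k hk
          exact if_neg (Finset.disjoint_left.mp hdj (hX hk))
        constructor
        · intro X hX
          rw [hxeq X hX]; exact (hxblocks C' hC').1 X hX
        · rw [hxeq C' (subset_refl C')]; exact (hxblocks C' hC').2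
    have hle := hxmin y' hy'B
    rw [hsumU (fun i => x i ^ 2 / w i), hsumU (fun i => y' i ^ 2 / w i)] at hle
    rw [← Finset.add_sum_erase P _ hC, ← Finset.add_sum_erase P _ hC] at hle
    have herase : ∑ C' ∈ P.erase C, ∑ k ∈ C', y' k ^ 2 / w k
        = ∑ C' ∈ P.erase C, ∑ k ∈ C', x k ^ 2 / w k := by
      apply Finset.sum_congr rfl
      intro C' hC'
      apply Finset.sum_congr rfl
      intro k hk
      have hdj := hdisj C' (Finset.mem_of_mem_erase hC') C hC (Finset.ne_of_mem_erase hC')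
      rw [hy'def]
      simp only [if_neg (Finset.disjoint_left.mp hdj hk)]
    rw [herase] at hle
    have hle2 : ∑ k ∈ C, x k ^ 2 / w k ≤ ∑ k ∈ C, y' k ^ 2 / w k := by
      linarith
    have : ∑ k ∈ C, y' k ^ 2 / w k = ∑ k ∈ C, y k ^ 2 / w k :=
      Finset.sum_congr rfl fun k hk => by rw [hy'def]; simp [if_pos hk]
    linarith
  · intro hblocks
    have hxB : (∀ X : Finset V, ∑ k ∈ X, x k ≤ f X) ∧ ∑ k, x k = f Finset.univ :=
      (hmem x).mpr fun C hC => (hblocks C hC).1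
    refine ⟨hxB, ?_⟩
    intro y hyB
    have hyblocks := (hmem y).mp hyB
    rw [hsumU (fun i => x i ^ 2 / w i), hsumU (fun i => y i ^ 2 / w i)]
    apply Finset.sum_le_sum
    intro C hC
    exact (hblocks C hC).2 y (hyblocks C hC)
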